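/- Let S be a nonempty semistable HN datum and let A, B be HN data such that A slopewise dominates B. Then δ(S, B) ≤ δ(S, A). -/

import Mathlib

namespace HN

def slope (v : ℤ × ℤ) : ℚ := (v.2 : ℚ) / (v.1 : ℚ)

def cross (v w : ℤ × ℤ) : ℤ := v.1 * w.2 - v.2 * w.1

def IsHNDatum (E : List (ℤ × ℤ)) : Prop :=
  (∀ v ∈ E, 1 ≤ v.1) ∧ E.Pairwise (fun v w => slope w < slope v)

def rk (E : List (ℤ × ℤ)) : ℤ := (E.map Prod.fst).sum

def deg (E : List (ℤ × ℤ)) : ℤ := (E.map Prod.snd).sum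

def delta (E F : List (ℤ × ℤ)) : ℤ :=
  (E.map fun e => ((F.filter fun f => decide (slope e ≤ slope f)).map fun f => cross e f).sum).sum

def geSlope (E : List (ℤ × ℤ)) (μ : ℚ) : List (ℤ × ℤ) := E.filter fun v => decide (μ ≤ slope v)
def gtSlope (E : List (ℤ × ℤ)) (μ : ℚ) : List (ℤ × ℤ) := E.filter fun v => decide (μ < slope v)
def ltSlope (E : List (ℤ × ℤ)) (μ : ℚ) : List (ℤ × ℤ) := E.filter fun v => decide (slope v < μ)

def sigmaList (E : List (ℤ × ℤ)) : List ℚ :=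
  E.flatMap fun v => List.replicate v.1.toNat (slope v)

def sigmaSlope (E : List (ℤ × ℤ)) (i : ℕ) : ℚ := (sigmaList E).getD (i - 1) 0

def poly (E : List (ℤ × ℤ)) (k : ℕ) : ℚ := ((sigmaList E).take k).sum

def polySum (A B : List (ℤ × ℤ)) (k : ℕ) : ℚ :=
  (((sigmaList A ++ sigmaList B).mergeSort fun a b => decide (b ≤ a)).take k).sum

def SlopewiseDom (E F : List (ℤ × ℤ)) : Prop :=
  ∀ μ : ℚ, rk (geSlope F μ) ≤ rk (geSlope E μ)

def StrongSlopewiseDom (E F : List (ℤ × ℤ)) : Prop :=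
  SlopewiseDom E F ∧ ∀ μ : ℚ, rk (geSlope E μ) = rk (geSlope F μ) → geSlope E μ = geSlope F μ

def dual (E : List (ℤ × ℤ)) : List (ℤ × ℤ) := (E.map fun v => (v.1, -v.2)).reverse

def HNleSum (E A B : List (ℤ × ℤ)) : Prop :=
  rk E = rk A + rk B ∧ deg E = deg A + deg B ∧
    ∀ k : ℕ, (k : ℤ) ≤ rk E → poly E k ≤ polySum A B k

def HasVertex (V : List (ℤ × ℤ)) (j : ℕ) : Prop :=
  (j : ℤ) = rk V ∨ sigmaSlope V (j + 1) < sigmaSlope V j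

-- key lemma over multisets
lemma key (μ : ℚ) : ∀ (n : ℕ) (M L : Multiset ℚ), M.card = n →
    (∀ t : ℚ, (M.filter (fun x => t ≤ x)).card ≤ (L.filter (fun x => t ≤ x)).card) →
    (M.map (fun x => max (x - μ) 0)).sum ≤ (L.map (fun x => max (x - μ) 0)).sum := by
  intro n
  induction n with
  | zero =>
      intro M L hM _
      rw [Multiset.card_eq_zero.mp hM]
      simp only [Multiset.map_zero, Multiset.sum_zero]
      apply Multiset.sum_nonneg
      intro x hx
      obtain ⟨y, _, rfl⟩ := Multiset.mem_map.mp hx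
      exact le_max_right _ _
  | succ n ih =>
      intro M L hM h
      have hMne : M ≠ 0 := by
        intro hh; rw [hh] at hM; simp at hM
      have hFne : M.toFinset.Nonempty := by
        obtain ⟨x, hx⟩ := Multiset.exists_mem_of_ne_zero hMne
        exact ⟨x, Multiset.mem_toFinset.mpr hx⟩
      set m := M.toFinset.max' hFne with hm
      have hmM : m ∈ M := Multiset.mem_toFinset.mp (M.toFinset.max'_mem hFne)
      have hmax : ∀ x ∈ M, x ≤ m := fun x hx =>
        M.toFinset.le_max' x (Multiset.mem_toFinset.mpr hx)
      have hcard1 : 1 ≤ (L.filter (fun x => m ≤ x)).card := by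
        have : 1 ≤ (M.filter (fun x => m ≤ x)).card := by
          rw [Nat.succ_le_iff, Multiset.card_pos_iff_exists_mem]
          exact ⟨m, Multiset.mem_filter.mpr ⟨hmM, le_refl m⟩⟩
        exact this.trans (h m)
      obtain ⟨ℓ, hℓ⟩ := Multiset.card_pos_iff_exists_mem.mp (Nat.lt_of_lt_of_le Nat.zero_lt_one hcard1)
      have hℓL : ℓ ∈ L := (Multiset.mem_filter.mp hℓ).1
      have hmℓ : m ≤ ℓ := (Multiset.mem_filter.mp hℓ).2
      have hM' : (M.erase m).card = n := by
        rw [Multiset.card_erase_of_mem hmM, hM]; rfl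
      have hdom : ∀ t : ℚ, ((M.erase m).filter (fun x => t ≤ x)).card ≤
          ((L.erase ℓ).filter (fun x => t ≤ x)).card := by
        intro t
        by_cases htm : t ≤ m
        · have e1 : (M.filter (fun x => t ≤ x)).card
              = ((M.erase m).filter (fun x => t ≤ x)).card + 1 := by
            conv_lhs => rw [← Multiset.cons_erase hmM]
            rw [Multiset.filter_cons_of_pos _ htm, Multiset.card_cons]
          have e2 : (L.filter (fun x => t ≤ x)).card
              = ((L.erase ℓ).filter (fun x => t ≤ x)).card + 1 := by
            conv_lhs => rw [← Multiset.cons_erase hℓL]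
            rw [Multiset.filter_cons_of_pos _ (htm.trans hmℓ), Multiset.card_cons]
          have := h t
          omega
        · have : (M.erase m).filter (fun x => t ≤ x) = 0 := by
            rw [Multiset.filter_eq_nil]
            intro a ha hta
            exact htm (hta.trans (hmax a (Multiset.mem_of_mem_erase ha)))
          rw [this]; simp
      have hsum := ih (M.erase m) (L.erase ℓ) hM' hdom
      have eM : (M.map (fun x => max (x - μ) 0)).sum
          = max (m - μ) 0 + ((M.erase m).map (fun x => max (x - μ) 0)).sum := by
        conv_lhs => rw [← Multiset.cons_erase hmM]
        rw [Multiset.map_cons, Multiset.sum_cons]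
      have eL : (L.map (fun x => max (x - μ) 0)).sum
          = max (ℓ - μ) 0 + ((L.erase ℓ).map (fun x => max (x - μ) 0)).sum := by
        conv_lhs => rw [← Multiset.cons_erase hℓL]
        rw [Multiset.map_cons, Multiset.sum_cons]
      rw [eM, eL]
      exact add_le_add (max_le_max (sub_le_sub_right hmℓ μ) le_rfl) hsum


-- count lemma
lemma count_eq (t : ℚ) (X : List (ℤ × ℤ)) (hX : ∀ v ∈ X, 1 ≤ v.1) :
    (((sigmaList X).filter (fun x => t ≤ x)).length : ℤ) = rk (geSlope X t) := by
  induction X with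
  | nil => simp [sigmaList, rk, geSlope]
  | cons f X ih =>
      have hf : 1 ≤ f.1 := hX f List.mem_cons_self
      have ih' := ih (fun v hv => hX v (List.mem_cons_of_mem f hv))
      simp only [sigmaList, List.flatMap_cons, List.filter_append, List.length_append]
      by_cases htf : t ≤ slope f
      · have hrep : (List.replicate f.1.toNat (slope f)).filter (fun x => t ≤ x)
            = List.replicate f.1.toNat (slope f) := by
          rw [List.filter_eq_self]
          intro a ha
          rw [List.eq_of_mem_replicate ha]
          exact decide_eq_true htf
        rw [hrep, List.length_replicate]
        simp only [geSlope, rk, List.filter_cons, decide_eq_true htf]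
        simp only [sigmaList] at ih'
        push_cast
        rw [Int.toNat_of_nonneg (le_trans zero_le_one hf)]
        simp only [geSlope, rk] at ih'
        rw [List.map_cons, List.sum_cons]

        linarith [ih']
      · have hrep : (List.replicate f.1.toNat (slope f)).filter (fun x => t ≤ x) = [] := by
          rw [List.filter_eq_nil_iff]
          intro a ha
          rw [List.eq_of_mem_replicate ha]
          simpa using htf
        rw [hrep]
        simp only [geSlope, rk, List.filter_cons, decide_eq_false htf]
        simp only [geSlope, rk, sigmaList] at ih'
        simpa using ih'

-- delta for singleton
lemma delta_eq (s : ℤ × ℤ) (hs : 1 ≤ s.1) (X : List (ℤ × ℤ)) (hX : ∀ v ∈ X, 1 ≤ v.1) :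
    (delta [s] X : ℚ) = (s.1 : ℚ) * ((sigmaList X).map (fun x => max (x - slope s) 0)).sum := by
  induction X with
  | nil => simp [delta, sigmaList]
  | cons f X ih =>
      have hf : 1 ≤ f.1 := hX f List.mem_cons_self
      have ih' := ih (fun v hv => hX v (List.mem_cons_of_mem f hv))
      have hf0 : (f.1 : ℚ) ≠ 0 := by
        have : (1:ℚ) ≤ (f.1:ℚ) := by exact_mod_cast hf
        linarith
      have hs0 : (s.1 : ℚ) ≠ 0 := by
        have : (1:ℚ) ≤ (s.1:ℚ) := by exact_mod_cast hs
        linarith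
      have hd : ∀ Y : List (ℤ × ℤ), delta [s] Y
          = ((Y.filter fun g => decide (slope s ≤ slope g)).map (cross s)).sum := by
        intro Y; simp [delta]
      have hrepsum : ((List.replicate f.1.toNat (slope f)).map
            (fun x => max (x - slope s) 0)).sum
          = (f.1.toNat : ℚ) * max (slope f - slope s) 0 := by
        rw [List.map_replicate, List.sum_replicate, nsmul_eq_mul]
      have htn : ((f.1.toNat : ℕ) : ℚ) = (f.1 : ℚ) := by
        exact_mod_cast congrArg (Int.cast : ℤ → ℚ) (Int.toNat_of_nonneg (le_trans zero_le_one hf))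
      simp only [sigmaList, List.flatMap_cons, List.map_append, List.sum_append, hrepsum]
      rw [hd, List.filter_cons]
      by_cases hsf : slope s ≤ slope f
      · rw [if_pos (decide_eq_true hsf)]
        rw [List.map_cons, List.sum_cons, Int.cast_add, ← hd, ih']
        have hmax : max (slope f - slope s) 0 = slope f - slope s :=
          max_eq_left (by linarith)
        rw [hmax, htn]
        have : (cross s f : ℚ) = s.1 * f.2 - s.2 * f.1 := by
          simp only [cross]; push_cast; ring
        have hid : (s.1:ℚ) * ((f.1:ℚ) * (slope f - slope s)) = s.1*f.2 - s.2*f.1 := by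
          have hslf : slope f = (f.2 : ℚ) / (f.1 : ℚ) := rfl
          have hsls : slope s = (s.2 : ℚ) / (s.1 : ℚ) := rfl
          rw [hslf, hsls]
          field_simp
          try ring
        rw [this, mul_add, hid]
        rfl
      · rw [if_neg (by simpa using hsf)]
        rw [← hd, ih']
        have hmax : max (slope f - slope s) 0 = 0 := max_eq_right (by push_neg at hsf; linarith)
        rw [hmax]
        show _ = _ * ((f.1.toNat:ℚ) * 0 + _)
        rw [mul_zero, zero_add]
        rfl

/-- If A slopewise dominates B then δ(S,B) ≤ δ(S,A) for S nonempty semistable. -/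
theorem statement13 (S A B : List (ℤ × ℤ))
    (hS : IsHNDatum S) (hA : IsHNDatum A) (hB : IsHNDatum B)
    (hSne : S ≠ []) (hSss : S.length ≤ 1)
    (h : SlopewiseDom A B) :
    delta S B ≤ delta S A := by
  -- S = [s]
  obtain ⟨s, rfl⟩ : ∃ s, S = [s] := by
    match S, hSne, hSss with
    | [s], _, _ => exact ⟨s, rfl⟩
  have hs : 1 ≤ s.1 := hS.1 s List.mem_cons_self
  have hcast : ((delta [s] B : ℤ) : ℚ) ≤ ((delta [s] A : ℤ) : ℚ) := by
    rw [delta_eq s hs B hB.1, delta_eq s hs A hA.1]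
    apply mul_le_mul_of_nonneg_left _ (by positivity : (0:ℚ) ≤ (s.1:ℚ))
    have hkey := key (slope s) (sigmaList B).length
      (↑(sigmaList B) : Multiset ℚ) (↑(sigmaList A) : Multiset ℚ)
      (by simp) ?_
    · simpa using hkey
    · intro t
      have h1 := count_eq t B hB.1
      have h2 := count_eq t A hA.1
      have h3 := h t
      have : (((sigmaList B).filter (fun x => t ≤ x)).length : ℤ)
          ≤ (((sigmaList A).filter (fun x => t ≤ x)).length : ℤ) := by
        rw [h1, h2]; exact h3
      simpa using this
  exact_mod_cast hcast

end HN
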